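/- Let d ≥ 2, let t ≥ 0, and let ρ and σ be positive-semidefinite Hermitian d×d complex matrices with tr ρ = tr σ = t. Let f : [0,t] → ℝ be a continuous convex function, and let ε := T(ρ,σ) := (1/2)·Σ_{i=1}^d |λ_i(ρ−σ)|. Then |S_f(ρ) − S_f(σ)| ≤ Δ_{t;f;d}(ε) := f(t) − f(t−ε) − (d−1)·(f(ε/(d−1)) − f(0)). -/

import Mathlib

open Matrix BigOperators ComplexOrder

namespace FEB


lemma slope_le {t : ℝ} {f : ℝ → ℝ} (hf : ConvexOn ℝ (Set.Icc 0 t) f)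
    {a b c e : ℝ} (ha : 0 ≤ a) (het : e ≤ t) (hab : a < b) (hce : c < e)
    (hac : a ≤ c) (hbe : b ≤ e) :
    (f b - f a) / (b - a) ≤ (f e - f c) / (e - c) := by
  have hae : a < e := lt_of_lt_of_le hab hbe
  have hmem : ∀ x, a ≤ x → x ≤ e → x ∈ Set.Icc 0 t := fun x h1 h2 =>
    ⟨le_trans ha h1, le_trans h2 het⟩
  have hma : a ∈ Set.Icc 0 t := hmem a le_rfl hae.le
  have hmb : b ∈ Set.Icc 0 t := hmem b hab.le hbe
  have hmc : c ∈ Set.Icc 0 t := hmem c hac hce.le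
  have hme : e ∈ Set.Icc 0 t := hmem e hae.le le_rfl
  have h1 : (f b - f a) / (b - a) ≤ (f e - f a) / (e - a) :=
    hf.secant_mono hma hmb hme (ne_of_gt hab) (ne_of_gt hae) hbe
  have h2 : (f a - f e) / (a - e) ≤ (f c - f e) / (c - e) :=
    hf.secant_mono hme hma hmc (ne_of_lt hae) (ne_of_lt hce) hac
  have h2' : (f e - f a) / (e - a) ≤ (f e - f c) / (e - c) := by
    have e1 : (f a - f e) / (a - e) = (f e - f a) / (e - a) := by
      rw [← neg_div_neg_eq]; ring_nf
    have e2 : (f c - f e) / (c - e) = (f e - f c) / (e - c) := by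
      rw [← neg_div_neg_eq]; ring_nf
    rw [e1, e2] at h2; exact h2
  exact le_trans h1 h2'

lemma shift_le {t : ℝ} {f : ℝ → ℝ} (hf : ConvexOn ℝ (Set.Icc 0 t) f)
    {x y δ : ℝ} (hx : 0 ≤ x) (hxy : x ≤ y) (hδ : 0 ≤ δ) (hyt : y + δ ≤ t) :
    f (x + δ) - f x ≤ f (y + δ) - f y := by
  rcases eq_or_lt_of_le hδ with h0 | hδpos
  · simp [← h0]
  rcases eq_or_lt_of_le hxy with h0 | hxy'
  · rw [h0]
  have h := slope_le hf hx hyt (by linarith : x < x + δ) (by linarith : y < y + δ)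
    hxy (by linarith)
  simp only [add_sub_cancel_left] at h
  rw [div_le_div_iff₀ hδpos hδpos] at h
  exact le_of_mul_le_mul_right h hδpos



lemma telescope {t : ℝ} {f : ℝ → ℝ} (hf : ConvexOn ℝ (Set.Icc 0 t) f)
    {ι : Type*} [DecidableEq ι] (p δv : ι → ℝ) (F : Finset ι) :
    ∀ (T : ℝ), T ≤ t →
      (∀ i ∈ F, 0 ≤ p i) → (∀ i ∈ F, 0 ≤ δv i) →
      (∀ i ∈ F, p i + ∑ l ∈ F, δv l ≤ T) →
      ∑ i ∈ F, (f (p i + δv i) - f (p i)) ≤ f T - f (T - ∑ i ∈ F, δv i) := by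
  induction F using Finset.induction_on with
  | empty => intro T _ _ _ _; simp
  | @insert a F' ha IH =>
    intro T hTt hp hδ hsum
    rw [Finset.sum_insert ha, Finset.sum_insert ha]
    have hSδ0 : 0 ≤ ∑ l ∈ F', δv l :=
      Finset.sum_nonneg fun i hi => hδ i (Finset.mem_insert_of_mem hi)
    have hδa : 0 ≤ δv a := hδ a (Finset.mem_insert_self _ _)
    have hpa : 0 ≤ p a := hp a (Finset.mem_insert_self _ _)
    have hsa : p a + (δv a + ∑ l ∈ F', δv l) ≤ T := by
      have := hsum a (Finset.mem_insert_self _ _)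
      rwa [Finset.sum_insert ha] at this
    have IH' : ∑ i ∈ F', (f (p i + δv i) - f (p i)) ≤
        f T - f (T - ∑ l ∈ F', δv l) := by
      refine IH T hTt (fun i hi => hp i (Finset.mem_insert_of_mem hi))
        (fun i hi => hδ i (Finset.mem_insert_of_mem hi)) (fun i hi => ?_)
      have := hsum i (Finset.mem_insert_of_mem hi)
      rw [Finset.sum_insert ha] at this
      linarith
    have hstep : f (p a + δv a) - f (p a) ≤
        f (T - ∑ l ∈ F', δv l) - f (T - ∑ l ∈ F', δv l - δv a) := by
      have h := shift_le hf hpa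
        (show p a ≤ T - ∑ l ∈ F', δv l - δv a by linarith) hδa
        (show T - ∑ l ∈ F', δv l - δv a + δv a ≤ t by linarith)
      have e : T - ∑ l ∈ F', δv l - δv a + δv a = T - ∑ l ∈ F', δv l := by ring
      rwa [e] at h
    have e2 : T - (δv a + ∑ l ∈ F', δv l) = T - ∑ l ∈ F', δv l - δv a := by ring
    rw [e2]
    linarith



lemma scalar_core {d : ℕ} (hd : 2 ≤ d) {t : ℝ} (ht : 0 ≤ t) {f : ℝ → ℝ}
    (hf : ConvexOn ℝ (Set.Icc 0 t) f) (p q : Fin d → ℝ)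
    (hp0 : ∀ i, 0 ≤ p i) (hq0 : ∀ i, 0 ≤ q i)
    (hps : ∑ i, p i = t) (hqs : ∑ i, q i = t) :
    ∑ i, f (q i) - ∑ i, f (p i) ≤
      f t - f (t - ∑ i, max (q i - p i) 0)
        - ((d : ℝ) - 1) * (f ((∑ i, max (q i - p i) 0) / ((d : ℝ) - 1)) - f 0) := by
  classical
  set δ : ℝ := ∑ i, max (q i - p i) 0 with hδdef
  have hmax : ∀ i, max (q i - p i) 0 = if p i < q i then q i - p i else 0 := by
    intro i; split_ifs with h
    · exact max_eq_left (by linarith)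
    · exact max_eq_right (by push_neg at h; linarith)
  have hδ0 : 0 ≤ δ := Finset.sum_nonneg fun i _ => le_max_right _ _
  set U : Finset (Fin d) := Finset.univ.filter (fun i => p i < q i) with hUdef
  set D : Finset (Fin d) := Finset.univ.filter (fun i => q i < p i) with hDdef
  have hpt : ∀ i, p i ≤ t := by
    intro i
    calc p i ≤ ∑ j, p j := Finset.single_le_sum (fun j _ => hp0 j) (Finset.mem_univ i)
    _ = t := hps
  have hqt : ∀ i, q i ≤ t := by
    intro i
    calc q i ≤ ∑ j, q j := Finset.single_le_sum (fun j _ => hq0 j) (Finset.mem_univ i)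
    _ = t := hqs
  have hδU : δ = ∑ i ∈ U, (q i - p i) := by
    rw [hδdef, hUdef, Finset.sum_filter]
    exact Finset.sum_congr rfl fun i _ => hmax i
  -- split of total difference
  have hsplitFQ : ∑ i, (f (q i) - f (p i)) =
      ∑ i ∈ U, (f (q i) - f (p i)) + ∑ i ∈ Finset.univ.filter (fun i => ¬ p i < q i), (f (q i) - f (p i)) :=
    (Finset.sum_filter_add_sum_filter_not _ _ _).symm
  have hDsubset : D ⊆ Finset.univ.filter (fun i => ¬ p i < q i) := by
    intro i hi
    simp only [hDdef, Finset.mem_filter, Finset.mem_univ, true_and] at hi ⊢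
    linarith
  have hrest : ∑ i ∈ Finset.univ.filter (fun i => ¬ p i < q i), (f (q i) - f (p i)) =
      ∑ i ∈ D, (f (q i) - f (p i)) := by
    refine (Finset.sum_subset hDsubset fun i hi hiD => ?_).symm
    simp only [hDdef, Finset.mem_filter, Finset.mem_univ, true_and] at hi hiD
    have : q i = p i := le_antisymm (by push_neg at hi; exact hi) (by push_neg at hiD; exact hiD)
    rw [this, sub_self]
  -- increase part
  have hUtel : ∑ i ∈ U, (f (q i) - f (p i)) ≤ f t - f (t - δ) := by
    have key : ∀ i ∈ U, p i + ∑ l ∈ U, (q l - p l) ≤ t := by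
      intro i hi
      have h1 : ∑ l ∈ U, (q l - p l) = (q i - p i) + ∑ l ∈ U.erase i, (q l - p l) :=
        (Finset.add_sum_erase _ _ hi).symm
      have h2 : ∑ l ∈ U.erase i, (q l - p l) ≤ ∑ l ∈ Finset.univ.erase i, q l := by
        calc ∑ l ∈ U.erase i, (q l - p l) ≤ ∑ l ∈ U.erase i, q l :=
              Finset.sum_le_sum fun l _ => by linarith [hp0 l]
        _ ≤ ∑ l ∈ Finset.univ.erase i, q l := by
              refine Finset.sum_le_sum_of_subset_of_nonneg ?_ fun l _ _ => hq0 l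
              exact Finset.erase_subset_erase _ (Finset.subset_univ _)
      have h3 : q i + ∑ l ∈ Finset.univ.erase i, q l = t := by
        rw [Finset.add_sum_erase _ _ (Finset.mem_univ i)]; exact hqs
      linarith
    have htel := telescope hf p (fun i => q i - p i) U t le_rfl
      (fun i _ => hp0 i) (fun i hi => by
        simp only [hUdef, Finset.mem_filter, Finset.mem_univ, true_and] at hi
        show (0:ℝ) ≤ q i - p i
        linarith)
      key
    have e : ∀ i, p i + (q i - p i) = q i := fun i => by ring
    simp only [e] at htel
    rwa [← hδU] at htel
  -- trivial case δ = 0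
  rcases eq_or_lt_of_le hδ0 with h0 | hδpos
  · have hqple : ∀ i, q i - p i ≤ 0 := by
      intro i
      by_contra h
      push_neg at h
      have h1 : 0 < max (q i - p i) 0 := lt_of_lt_of_le h (le_max_left _ _)
      have h2 : max (q i - p i) 0 ≤ δ :=
        Finset.single_le_sum (f := fun i => max (q i - p i) 0)
          (fun j _ => le_max_right _ _) (Finset.mem_univ i)
      linarith
    have hsum0 : ∑ i, (p i - q i) = 0 := by
      rw [Finset.sum_sub_distrib, hps, hqs, sub_self]
    have hall := (Finset.sum_eq_zero_iff_of_nonneg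
      (fun i _ => by linarith [hqple i])).mp hsum0
    have hqp : ∀ i, q i = p i := fun i => by
      have := hall i (Finset.mem_univ i); linarith
    simp only [hqp, ← h0, sub_zero, zero_div, sub_self, mul_zero]
    linarith
  -- main case: δ > 0
  have hδD : ∑ i ∈ D, (p i - q i) = δ := by
    have h1 : ∑ i ∈ D, (p i - q i) + ∑ i ∈ Finset.univ.filter (fun i => ¬ q i < p i), (p i - q i)
        = ∑ i, (p i - q i) := Finset.sum_filter_add_sum_filter_not _ _ _
    have h2 : ∑ i, (p i - q i) = 0 := by rw [Finset.sum_sub_distrib, hps, hqs, sub_self]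
    have h3 : δ = ∑ i ∈ Finset.univ.filter (fun i => ¬ q i < p i), (q i - p i) := by
      rw [hδdef, Finset.sum_filter]
      refine Finset.sum_congr rfl fun i _ => ?_
      rw [hmax i]
      by_cases h : p i < q i
      · rw [if_pos h, if_pos (show ¬ q i < p i by push_neg; linarith)]
      · by_cases h' : q i < p i
        · rw [if_neg h, if_neg (not_not_intro h')]
        · push_neg at h h'
          rw [if_neg (not_lt.mpr h), if_pos (not_lt.mpr h')]
          linarith
    have h4 : ∑ i ∈ Finset.univ.filter (fun i => ¬ q i < p i), (p i - q i)
        = - ∑ i ∈ Finset.univ.filter (fun i => ¬ q i < p i), (q i - p i) := by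
      rw [← Finset.sum_neg_distrib]
      exact Finset.sum_congr rfl fun i _ => by ring
    rw [h4, ← h3] at h1
    linarith
  have hDne : D.Nonempty := by
    rw [Finset.nonempty_iff_ne_empty]
    intro h
    rw [h, Finset.sum_empty] at hδD
    linarith
  have hUne : U.Nonempty := by
    rw [Finset.nonempty_iff_ne_empty]
    intro h
    rw [h, Finset.sum_empty] at hδU
    linarith
  set m : ℕ := D.card with hmdef
  have hm1 : 1 ≤ m := Finset.card_pos.mpr hDne
  have hmd : m + 1 ≤ d := by
    have hdisj : Disjoint D U := by
      rw [Finset.disjoint_left]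
      intro i hiD hiU
      simp only [hDdef, Finset.mem_filter, Finset.mem_univ, true_and] at hiD
      simp only [hUdef, Finset.mem_filter, Finset.mem_univ, true_and] at hiU
      linarith
    have hcard : m + U.card = (D ∪ U).card := (Finset.card_union_of_disjoint hdisj).symm
    have hle : (D ∪ U).card ≤ d := by
      have := Finset.card_le_univ (D ∪ U)
      simpa using this
    have hU1 : 1 ≤ U.card := Finset.card_pos.mpr hUne
    omega
  -- decrease part
  have hDbound : ∀ i ∈ D, f (q i) - f (p i) ≤ f 0 - f (p i - q i) := by
    intro i hi
    simp only [hDdef, Finset.mem_filter, Finset.mem_univ, true_and] at hi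
    have h := shift_le hf (le_refl (0:ℝ)) (hq0 i) (show (0:ℝ) ≤ p i - q i by linarith)
      (show q i + (p i - q i) ≤ t by linarith [hpt i])
    have e : q i + (p i - q i) = p i := by ring
    rw [e, zero_add] at h
    linarith
  have hDsum : ∑ i ∈ D, (f (q i) - f (p i)) ≤ (m : ℝ) * f 0 - ∑ i ∈ D, f (p i - q i) := by
    calc ∑ i ∈ D, (f (q i) - f (p i)) ≤ ∑ i ∈ D, (f 0 - f (p i - q i)) :=
          Finset.sum_le_sum hDbound
    _ = (m : ℝ) * f 0 - ∑ i ∈ D, f (p i - q i) := by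
          rw [Finset.sum_sub_distrib, Finset.sum_const, nsmul_eq_mul, hmdef]
  have hδt : δ ≤ t := by
    have h1 : ∑ i ∈ D, (p i - q i) ≤ ∑ i ∈ D, p i :=
      Finset.sum_le_sum fun i _ => by linarith [hq0 i]
    have h2 : ∑ i ∈ D, p i ≤ ∑ i, p i :=
      Finset.sum_le_sum_of_subset_of_nonneg (Finset.subset_univ _) fun i _ _ => hp0 i
    linarith [hδD]
  have hδm_t : δ / (m:ℝ) ≤ t :=
    le_trans (div_le_self hδ0 (by exact_mod_cast hm1)) hδt
  -- Jensen
  have hm0 : (0:ℝ) < (m : ℝ) := by exact_mod_cast hm1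
  have hmne : (m:ℝ) ≠ 0 := ne_of_gt hm0
  have hJ := hf.map_sum_le (t := D) (w := fun _ => 1/(m:ℝ))
    (p := fun i => p i - q i)
    (fun i _ => by positivity)
    (by rw [Finset.sum_const, nsmul_eq_mul]; field_simp; rfl)
    (fun i hi => by
      simp only [hDdef, Finset.mem_filter, Finset.mem_univ, true_and] at hi
      show p i - q i ∈ Set.Icc (0:ℝ) t
      exact ⟨by linarith, by linarith [hpt i, hq0 i]⟩)
  simp only [smul_eq_mul] at hJ
  rw [← Finset.mul_sum, hδD] at hJ
  have hJ' : (m:ℝ) * f (δ / (m:ℝ)) ≤ ∑ i ∈ D, f (p i - q i) := by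
    have h2 : 1/(m:ℝ) * δ = δ / (m:ℝ) := by field_simp
    rw [h2] at hJ
    have := mul_le_mul_of_nonneg_left hJ hm0.le
    rw [Finset.mul_sum] at this
    calc (m:ℝ) * f (δ / (m:ℝ)) ≤ ∑ i ∈ D, (m:ℝ) * (1/(m:ℝ) * f (p i - q i)) := this
    _ = ∑ i ∈ D, f (p i - q i) := by
        refine Finset.sum_congr rfl fun i _ => ?_
        field_simp
  -- k-monotonicity
  have hKM : ((d:ℝ) - 1) * (f (δ / ((d:ℝ)-1)) - f 0) ≤ (m:ℝ) * (f (δ / (m:ℝ)) - f 0) := by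
    have hd2 : (2:ℝ) ≤ (d:ℝ) := by exact_mod_cast hd
    have hM0 : (0:ℝ) < (d:ℝ) - 1 := by linarith
    have hmM : (m:ℝ) ≤ (d:ℝ) - 1 := by
      have : (m:ℝ) + 1 ≤ (d:ℝ) := by exact_mod_cast hmd
      linarith
    have hmem1 : δ / (m:ℝ) ∈ Set.Icc (0:ℝ) t := ⟨by positivity, hδm_t⟩
    have hmem0 : (0:ℝ) ∈ Set.Icc (0:ℝ) t := ⟨le_rfl, ht⟩
    have hb0 : (0:ℝ) ≤ 1 - (m:ℝ)/((d:ℝ)-1) := by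
      have : (m:ℝ)/((d:ℝ)-1) ≤ 1 := (div_le_one hM0).mpr hmM
      linarith
    have hcvx := hf.2 hmem1 hmem0 (by positivity : (0:ℝ) ≤ (m:ℝ)/((d:ℝ)-1)) hb0
      (by ring : (m:ℝ)/((d:ℝ)-1) + (1 - (m:ℝ)/((d:ℝ)-1)) = 1)
    simp only [smul_eq_mul, mul_zero, add_zero] at hcvx
    have hMne : ((d:ℝ)-1) ≠ 0 := ne_of_gt hM0
    have hpt' : (m:ℝ)/((d:ℝ)-1) * (δ/(m:ℝ)) = δ / ((d:ℝ)-1) := by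
      field_simp
    rw [hpt'] at hcvx
    have hmul := mul_le_mul_of_nonneg_left hcvx hM0.le
    have hexp : ((d:ℝ)-1) * ((m:ℝ)/((d:ℝ)-1) * f (δ/(m:ℝ)) + (1 - (m:ℝ)/((d:ℝ)-1)) * f 0)
        = (m:ℝ) * f (δ/(m:ℝ)) + (((d:ℝ)-1) - (m:ℝ)) * f 0 := by
      field_simp
    rw [hexp] at hmul
    linarith [hmul]
  have hfinal : ∑ i, f (q i) - ∑ i, f (p i) = ∑ i, (f (q i) - f (p i)) :=
    (Finset.sum_sub_distrib _ _).symm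
  rw [hfinal, hsplitFQ, hrest]
  have hDtotal : ∑ i ∈ D, (f (q i) - f (p i)) ≤
      -(((d:ℝ) - 1) * (f (δ / ((d:ℝ)-1)) - f 0)) := by
    have h1 : (m:ℝ) * f 0 - ∑ i ∈ D, f (p i - q i) ≤ -((m:ℝ) * (f (δ / (m:ℝ)) - f 0)) := by
      linarith [hJ']
    linarith [hDsum, hKM]
  linarith [hUtel, hDtotal]



lemma deltaMono_le {d : ℕ} (hd : 2 ≤ d) {t : ℝ} (ht : 0 ≤ t) {f : ℝ → ℝ}
    (hf : ConvexOn ℝ (Set.Icc 0 t) f) {x y : ℝ}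
    (hx : 0 ≤ x) (hxy : x ≤ y) (hyd : y + y / ((d:ℝ) - 1) ≤ t) :
    f t - f (t - x) - ((d:ℝ) - 1) * (f (x / ((d:ℝ)-1)) - f 0) ≤
      f t - f (t - y) - ((d:ℝ) - 1) * (f (y / ((d:ℝ)-1)) - f 0) := by
  rcases eq_or_lt_of_le hxy with rfl | hlt
  · exact le_refl _
  have hd2 : (2:ℝ) ≤ (d:ℝ) := by exact_mod_cast hd
  have hD0 : (0:ℝ) < (d:ℝ) - 1 := by linarith
  have hy0 : 0 ≤ y := le_trans hx hxy
  have hyD0 : 0 ≤ y / ((d:ℝ)-1) := by positivity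
  have hyd' : y / ((d:ℝ)-1) ≤ t - y := by linarith
  have hxyD : x / ((d:ℝ)-1) < y / ((d:ℝ)-1) := by apply div_lt_div_of_pos_right hlt hD0
  have h := slope_le hf (a := x/((d:ℝ)-1)) (b := y/((d:ℝ)-1)) (c := t - y) (e := t - x)
    (by positivity) (by linarith) hxyD (by linarith)
    (le_trans hxyD.le hyd') (by linarith)
  rw [div_sub_div_same] at h
  have e2 : t - x - (t - y) = y - x := by ring
  rw [e2, div_div_eq_mul_div] at h
  have hyx : (0:ℝ) < y - x := by linarith
  rw [div_le_div_iff₀ hyx hyx] at h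
  have h2 := le_of_mul_le_mul_right h hyx
  linarith

lemma deltaMono_ge {d : ℕ} (hd : 2 ≤ d) {t : ℝ} (ht : 0 ≤ t) {f : ℝ → ℝ}
    (hf : ConvexOn ℝ (Set.Icc 0 t) f) {x y : ℝ}
    (hyt : y ≤ t) (hxy : x ≤ y) (hxd : t ≤ x + x / ((d:ℝ) - 1)) :
    f t - f (t - y) - ((d:ℝ) - 1) * (f (y / ((d:ℝ)-1)) - f 0) ≤
      f t - f (t - x) - ((d:ℝ) - 1) * (f (x / ((d:ℝ)-1)) - f 0) := by
  have hd2 : (2:ℝ) ≤ (d:ℝ) := by exact_mod_cast hd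
  have hD0 : (0:ℝ) < (d:ℝ) - 1 := by linarith
  have hx0 : 0 ≤ x := by
    by_contra hneg
    push_neg at hneg
    have : x / ((d:ℝ)-1) < 0 := div_neg_of_neg_of_pos hneg hD0
    linarith
  rcases eq_or_lt_of_le hxy with rfl | hlt
  · exact le_refl _
  have hy0 : 0 ≤ y := le_trans hx0 hxy
  have hyDy : y / ((d:ℝ)-1) ≤ y := div_le_self hy0 (by linarith)
  have hxyD : x / ((d:ℝ)-1) < y / ((d:ℝ)-1) := by apply div_lt_div_of_pos_right hlt hD0
  have h := slope_le hf (a := t - y) (b := t - x) (c := x/((d:ℝ)-1)) (e := y/((d:ℝ)-1))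
    (by linarith) (by linarith) (by linarith) hxyD
    (by linarith) (by linarith)
  have e2 : t - x - (t - y) = y - x := by ring
  rw [e2, div_sub_div_same, div_div_eq_mul_div] at h
  have hyx : (0:ℝ) < y - x := by linarith
  rw [div_le_div_iff₀ hyx hyx] at h
  have h2 := le_of_mul_le_mul_right h hyx
  linarith

lemma one_sided {d : ℕ} (hd : 2 ≤ d) {t : ℝ} (ht : 0 ≤ t) {f : ℝ → ℝ}
    (hf : ConvexOn ℝ (Set.Icc 0 t) f)
    (r s q q' : Fin d → ℝ) (ε : ℝ) (hε0 : 0 ≤ ε)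
    (hr0 : ∀ i, 0 ≤ r i) (hrs : ∑ i, r i = t)
    (hq0 : ∀ i, 0 ≤ q i) (hqs : ∑ i, q i = t)
    (hqf : ∑ i, f (q i) ≤ ∑ i, f (s i))
    (hqδ : ∑ i, max (r i - q i) 0 ≤ ε)
    (hq'0 : ∀ i, 0 ≤ q' i) (hq's : ∑ i, q' i = t)
    (hq'f : ∑ i, f (q' i) ≤ ∑ i, f (s i))
    (hq'δ : ε ≤ ∑ i, max (r i - q' i) 0) :
    ∑ i, f (r i) - ∑ i, f (s i) ≤
      f t - f (t - ε) - ((d:ℝ) - 1) * (f (ε / ((d:ℝ)-1)) - f 0) := by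
  by_cases hcase : ε + ε / ((d:ℝ)-1) ≤ t
  · have hsc := scalar_core hd ht hf q r hq0 hr0 hqs hrs
    have hmono := deltaMono_le hd ht hf
      (x := ∑ i, max (r i - q i) 0) (y := ε)
      (Finset.sum_nonneg fun i _ => le_max_right _ _) hqδ hcase
    linarith
  · push_neg at hcase
    have hsc := scalar_core hd ht hf q' r hq'0 hr0 hq's hrs
    have hδ't : ∑ i, max (r i - q' i) 0 ≤ t := by
      calc ∑ i, max (r i - q' i) 0 ≤ ∑ i, r i :=
            Finset.sum_le_sum fun i _ => max_le (by linarith [hq'0 i]) (hr0 i)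
      _ = t := hrs
    have hmono := deltaMono_ge hd ht hf
      (x := ε) (y := ∑ i, max (r i - q' i) 0) hδ't hq'δ hcase.le
    linarith



lemma rcOfReal : ((RCLike.ofReal : ℝ → ℂ)) = Complex.ofReal := rfl

lemma trace_eq_sum_eigen {d : ℕ} (A : Matrix (Fin d) (Fin d) ℂ) (hA : A.IsHermitian) :
    A.trace = ((∑ i, hA.eigenvalues i : ℝ) : ℂ) := by
  conv_lhs => rw [hA.spectral_theorem, Unitary.conjStarAlgAut_apply]
  rw [Matrix.trace_mul_cycle]
  have h1 : star (hA.eigenvectorUnitary : Matrix (Fin d) (Fin d) ℂ) *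
      (hA.eigenvectorUnitary : Matrix (Fin d) (Fin d) ℂ) = 1 :=
    Matrix.mem_unitaryGroup_iff'.mp (hA.eigenvectorUnitary).2
  rw [h1, Matrix.one_mul, Matrix.trace_diagonal]
  push_cast
  rfl

lemma diag_conj_repr {d : ℕ} (B : Matrix (Fin d) (Fin d) ℂ) (hB : B.IsHermitian)
    (W : Matrix (Fin d) (Fin d) ℂ) (hW : W ∈ Matrix.unitaryGroup (Fin d) ℂ) :
    ∃ C : Fin d → Fin d → ℝ, (∀ j i, 0 ≤ C j i) ∧ (∀ j, ∑ i, C j i = 1) ∧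
      (∀ i, ∑ j, C j i = 1) ∧
      ∀ i, (Wᴴ * B * W) i i = ((∑ j, C j i * hB.eigenvalues j : ℝ) : ℂ) := by
  set V : Matrix (Fin d) (Fin d) ℂ := (hB.eigenvectorUnitary : Matrix (Fin d) (Fin d) ℂ) with hVdef
  have hV : V ∈ Matrix.unitaryGroup (Fin d) ℂ := (hB.eigenvectorUnitary).2
  set M : Matrix (Fin d) (Fin d) ℂ := Vᴴ * W with hMdef
  have hM : M ∈ Matrix.unitaryGroup (Fin d) ℂ := by
    rw [hMdef, ← Matrix.star_eq_conjTranspose]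
    exact mul_mem (Unitary.star_mem hV) hW
  have hrow : ∀ j, ∑ i, Complex.normSq (M j i) = 1 := by
    intro j
    have h1 : M * star M = 1 := Matrix.mem_unitaryGroup_iff.mp hM
    have h2 : (M * star M) j j = (1 : Matrix (Fin d) (Fin d) ℂ) j j := by rw [h1]
    rw [Matrix.mul_apply, Matrix.one_apply_eq] at h2
    have h3 : ∀ i, M j i * (star M) i j = ((Complex.normSq (M j i) : ℝ) : ℂ) := by
      intro i
      rw [Matrix.star_apply, RCLike.star_def, Complex.mul_conj]
    rw [Finset.sum_congr rfl fun i _ => h3 i] at h2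
    exact_mod_cast h2
  have hcol : ∀ i, ∑ j, Complex.normSq (M j i) = 1 := by
    intro i
    have h1 : star M * M = 1 := Matrix.mem_unitaryGroup_iff'.mp hM
    have h2 : (star M * M) i i = (1 : Matrix (Fin d) (Fin d) ℂ) i i := by rw [h1]
    rw [Matrix.mul_apply, Matrix.one_apply_eq] at h2
    have h3 : ∀ j, (star M) i j * M j i = ((Complex.normSq (M j i) : ℝ) : ℂ) := by
      intro j
      rw [Matrix.star_apply, mul_comm, RCLike.star_def, Complex.mul_conj]
    rw [Finset.sum_congr rfl fun j _ => h3 j] at h2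
    exact_mod_cast h2
  have hexp : Wᴴ * B * W = Mᴴ * (Matrix.diagonal (RCLike.ofReal ∘ hB.eigenvalues)) * M := by
    conv_lhs => rw [hB.spectral_theorem, Unitary.conjStarAlgAut_apply]
    rw [hMdef]
    simp only [Matrix.conjTranspose_mul, Matrix.conjTranspose_conjTranspose,
      Matrix.star_eq_conjTranspose, ← hVdef]
    noncomm_ring
  have hdiag : ∀ i, (Wᴴ * B * W) i i = ∑ j, ((hB.eigenvalues j : ℂ) * (Complex.normSq (M j i) : ℂ)) := by
    intro i
    rw [hexp, Matrix.mul_apply]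
    refine Finset.sum_congr rfl fun j _ => ?_
    rw [Matrix.mul_apply]
    rw [Finset.sum_eq_single j]
    · rw [Matrix.conjTranspose_apply, Matrix.diagonal_apply_eq]
      have h4 : (star (M j i)) * M j i = ((Complex.normSq (M j i) : ℝ) : ℂ) := by
        rw [RCLike.star_def]
        exact Complex.normSq_eq_conj_mul_self.symm
      calc star (M j i) * ((RCLike.ofReal ∘ hB.eigenvalues) j : ℂ) * M j i
          = ((hB.eigenvalues j : ℂ)) * (star (M j i) * M j i) := by
            simp only [Function.comp_apply, rcOfReal]; ring
      _ = (hB.eigenvalues j : ℂ) * ((Complex.normSq (M j i) : ℝ) : ℂ) := by rw [h4]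
    · intro b _ hbj
      rw [Matrix.conjTranspose_apply, Matrix.diagonal_apply_ne _ hbj]
      simp
    · intro h
      exact absurd (Finset.mem_univ j) h
  refine ⟨fun j i => Complex.normSq (M j i), fun j i => Complex.normSq_nonneg _,
    hrow, hcol, fun i => ?_⟩
  rw [hdiag i]
  push_cast
  exact Finset.sum_congr rfl fun j _ => mul_comm _ _



lemma weighted_le_posPart {d : ℕ} (v c : Fin d → ℝ)
    (hc0 : ∀ j, 0 ≤ c j) (hc1 : ∀ j, c j ≤ 1) :
    ∑ j, v j * c j ≤ ∑ j, max (v j) 0 := by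
  refine Finset.sum_le_sum fun j _ => ?_
  calc v j * c j ≤ max (v j) 0 * c j :=
        mul_le_mul_of_nonneg_right (le_max_left _ _) (hc0 j)
  _ ≤ max (v j) 0 * 1 := mul_le_mul_of_nonneg_left (hc1 j) (le_max_right _ _)
  _ = max (v j) 0 := mul_one _

lemma lp_upper {d : ℕ} (r c : Fin d → ℝ) (hc0 : ∀ i, 0 ≤ c i) (hc1 : ∀ i, c i ≤ 1)
    (k : ℕ) (hck : ∑ i, c i = (k : ℝ)) (T : Finset (Fin d)) (hT : T.card = k)
    (htop : ∀ i ∈ T, ∀ j, j ∉ T → r j ≤ r i) :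
    ∑ i, r i * c i ≤ ∑ i ∈ T, r i := by
  classical
  by_cases hTu : T = Finset.univ
  · subst hTu
    have hdk : ((Finset.univ : Finset (Fin d)).card : ℝ) = (k : ℝ) := by exact_mod_cast hT
    have hsum : ∑ i, (1 - c i) = 0 := by
      rw [Finset.sum_sub_distrib, hck, Finset.sum_const, nsmul_eq_mul, mul_one]
      rw [hdk]; ring
    have hall := (Finset.sum_eq_zero_iff_of_nonneg
      (fun i _ => by linarith [hc1 i])).mp hsum
    refine le_of_eq (Finset.sum_congr rfl fun i _ => ?_)
    have := hall i (Finset.mem_univ i)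
    have hci : c i = 1 := by linarith
    rw [hci, mul_one]
  · have hTne : (Finset.univ \ T).Nonempty := by
      rw [Finset.sdiff_nonempty]
      intro hsub
      exact hTu (Finset.univ_subset_iff.mp hsub)
    obtain ⟨b, hbmem, hbmax⟩ := Finset.exists_max_image (Finset.univ \ T) r hTne
    have hbT : b ∉ T := (Finset.mem_sdiff.mp hbmem).2
    have h1 : ∀ i ∈ T, r i * c i - r i ≤ r b * (c i - 1) := by
      intro i hi
      have hbi : r b ≤ r i := htop i hi b hbT
      have e : r i * c i - r i = r i * (c i - 1) := by ring
      rw [e]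
      exact mul_le_mul_of_nonpos_right hbi (by linarith [hc1 i])
    have h2 : ∀ j ∈ Finset.univ \ T, r j * c j ≤ r b * c j := fun j hj =>
      mul_le_mul_of_nonneg_right (hbmax j hj) (hc0 j)
    have hA : ∑ i ∈ T, (r i * c i - r i) ≤ r b * (∑ i ∈ T, c i - (k:ℝ)) := by
      calc ∑ i ∈ T, (r i * c i - r i) ≤ ∑ i ∈ T, r b * (c i - 1) :=
            Finset.sum_le_sum h1
      _ = r b * (∑ i ∈ T, c i - (k:ℝ)) := by
            rw [← Finset.mul_sum, Finset.sum_sub_distrib, Finset.sum_const,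
              nsmul_eq_mul, mul_one, hT]
    have hB : ∑ j ∈ Finset.univ \ T, r j * c j ≤ r b * ∑ j ∈ Finset.univ \ T, c j := by
      rw [Finset.mul_sum]
      exact Finset.sum_le_sum h2
    have hC : ∑ j ∈ Finset.univ \ T, c j + ∑ i ∈ T, c i = (k:ℝ) := by
      rw [Finset.sum_sdiff (Finset.subset_univ T), hck]
    have hD : ∑ i, r i * c i = ∑ j ∈ Finset.univ \ T, (r j * c j) + ∑ i ∈ T, (r i * c i) :=
      (Finset.sum_sdiff (Finset.subset_univ T)).symm
    have hE : r b * (∑ i ∈ T, c i - (k:ℝ)) + r b * ∑ j ∈ Finset.univ \ T, c j = 0 := by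
      linear_combination r b * hC
    have hF : ∑ i ∈ T, (r i * c i - r i) = ∑ i ∈ T, r i * c i - ∑ i ∈ T, r i :=
      Finset.sum_sub_distrib _ _
    linarith [hA, hB, hD, hE, hF]

lemma lp_lower' {d : ℕ} (s c : Fin d → ℝ) (hc0 : ∀ i, 0 ≤ c i) (hc1 : ∀ i, c i ≤ 1)
    (k : ℕ) (hck : ∑ i, c i = (k : ℝ)) (Bo : Finset (Fin d)) (hBo : Bo.card = k)
    (hbot : ∀ i ∈ Bo, ∀ j, j ∉ Bo → s i ≤ s j) :
    ∑ i ∈ Bo, s i ≤ ∑ i, s i * c i := by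
  have h := lp_upper (fun i => - s i) c hc0 hc1 k hck Bo hBo
    (fun i hi j hj => by simpa using hbot i hi j hj)
  simp only [neg_mul, Finset.sum_neg_distrib] at h
  linarith

lemma exists_topk {d : ℕ} (r : Fin d → ℝ) :
    ∀ k, k ≤ d → ∃ T : Finset (Fin d), T.card = k ∧ ∀ i ∈ T, ∀ j, j ∉ T → r j ≤ r i := by
  intro k
  induction k with
  | zero => exact fun _ => ⟨∅, Finset.card_empty, by simp⟩
  | succ k IH =>
    intro hk
    obtain ⟨T, hcard, htop⟩ := IH (Nat.le_of_succ_le hk)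
    have hne : (Finset.univ \ T).Nonempty := by
      rw [Finset.sdiff_nonempty]
      intro hsub
      have h1 := Finset.card_le_card hsub
      rw [Finset.card_univ, Fintype.card_fin] at h1
      omega
    obtain ⟨b, hb, hbmax⟩ := Finset.exists_max_image _ r hne
    have hbT : b ∉ T := (Finset.mem_sdiff.mp hb).2
    refine ⟨insert b T, ?_, ?_⟩
    · rw [Finset.card_insert_of_notMem hbT, hcard]
    · intro i hi j hj
      rcases Finset.mem_insert.mp hi with rfl | hiT
      · exact hbmax j (Finset.mem_sdiff.mpr
          ⟨Finset.mem_univ _, fun h => hj (Finset.mem_insert_of_mem h)⟩)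
      · exact htop i hiT j fun h => hj (Finset.mem_insert_of_mem h)

lemma exists_perm_finsets {d : ℕ} (T Bo : Finset (Fin d)) (h : T.card = Bo.card) :
    ∃ π : Equiv.Perm (Fin d), ∀ i, i ∈ T ↔ π i ∈ Bo := by
  classical
  have hcompl : (Tᶜ : Finset (Fin d)).card = (Boᶜ : Finset (Fin d)).card := by
    rw [Finset.card_compl, Finset.card_compl, h]
  let e1 : {x // x ∈ T} ≃ {x // x ∈ Bo} := Finset.equivOfCardEq h
  let e2 : {x // x ∈ (Tᶜ : Finset (Fin d))} ≃ {x // x ∈ (Boᶜ : Finset (Fin d))} :=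
    Finset.equivOfCardEq hcompl
  let e2' : {x // ¬ x ∈ T} ≃ {x // ¬ x ∈ Bo} :=
    ((Equiv.subtypeEquivRight (fun x => (Finset.mem_compl (s := T)).symm)).trans e2).trans
      (Equiv.subtypeEquivRight (fun x => Finset.mem_compl (s := Bo)))
  refine ⟨(Equiv.sumCompl (· ∈ T)).symm.trans ((e1.sumCongr e2').trans
    (Equiv.sumCompl (· ∈ Bo))), fun i => ?_⟩
  by_cases hi : i ∈ T
  · have : ((Equiv.sumCompl (· ∈ T)).symm.trans ((e1.sumCongr e2').trans
        (Equiv.sumCompl (· ∈ Bo)))) i = ↑(e1 ⟨i, hi⟩) := by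
      simp [Equiv.trans_apply, Equiv.sumCompl_symm_apply_of_pos hi]
    rw [this]
    exact iff_of_true hi (e1 ⟨i, hi⟩).2
  · have : ((Equiv.sumCompl (· ∈ T)).symm.trans ((e1.sumCongr e2').trans
        (Equiv.sumCompl (· ∈ Bo)))) i = ↑(e2' ⟨i, hi⟩) := by
      simp [Equiv.trans_apply, Equiv.sumCompl_symm_apply_of_neg hi]
    rw [this]
    exact iff_of_false hi (e2' ⟨i, hi⟩).2



lemma abs_decomp (x : ℝ) : |x| = max x 0 + max (-x) 0 := by
  rcases le_total x 0 with h | h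
  · rw [max_eq_right h, max_eq_left (by linarith), abs_of_nonpos h]; ring
  · rw [max_eq_left h, max_eq_right (by linarith), abs_of_nonneg h]; ring

lemma self_decomp (x : ℝ) : x = max x 0 - max (-x) 0 := by
  rcases le_total x 0 with h | h
  · rw [max_eq_right h, max_eq_left (by linarith)]; ring
  · rw [max_eq_left h, max_eq_right (by linarith)]; ring

lemma sum_max_filter {d : ℕ} (v : Fin d → ℝ) :
    ∑ i, max (v i) 0 = ∑ i ∈ Finset.univ.filter (fun i => 0 < v i), v i := by
  rw [Finset.sum_filter]
  refine Finset.sum_congr rfl fun i _ => ?_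
  split_ifs with h
  · exact max_eq_left h.le
  · exact max_eq_right (not_lt.mp h)

/-- Both diagonal–sum bounds for a conjugated Hermitian matrix. -/
lemma diag_sum_bounds {d : ℕ} (A : Matrix (Fin d) (Fin d) ℂ) (hA : A.IsHermitian)
    (W : Matrix (Fin d) (Fin d) ℂ) (hW : W ∈ Matrix.unitaryGroup (Fin d) ℂ)
    (S : Finset (Fin d)) :
    (∑ i ∈ S, ((Wᴴ * A * W) i i).re ≤ ∑ j, max (hA.eigenvalues j) 0) ∧
    (- ∑ i ∈ S, ((Wᴴ * A * W) i i).re ≤ ∑ j, max (- hA.eigenvalues j) 0) := by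
  obtain ⟨C, hC0, hCrow, hCcol, hCdiag⟩ := diag_conj_repr A hA W hW
  have hre : ∀ i, ((Wᴴ * A * W) i i).re = ∑ j, C j i * hA.eigenvalues j := by
    intro i
    rw [hCdiag i, Complex.ofReal_re]
  have hcS0 : ∀ j, 0 ≤ ∑ i ∈ S, C j i := fun j => Finset.sum_nonneg fun i _ => hC0 j i
  have hcS1 : ∀ j, ∑ i ∈ S, C j i ≤ 1 := fun j => by
    calc ∑ i ∈ S, C j i ≤ ∑ i, C j i :=
          Finset.sum_le_sum_of_subset_of_nonneg (Finset.subset_univ _) fun i _ _ => hC0 j i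
    _ = 1 := hCrow j
  have hswap : ∑ i ∈ S, ((Wᴴ * A * W) i i).re
      = ∑ j, hA.eigenvalues j * (∑ i ∈ S, C j i) := by
    simp only [hre]
    rw [Finset.sum_comm]
    refine Finset.sum_congr rfl fun j _ => ?_
    rw [← Finset.sum_mul]
    ring
  constructor
  · rw [hswap]
    exact weighted_le_posPart _ _ hcS0 hcS1
  · rw [hswap]
    have h := weighted_le_posPart (fun j => - hA.eigenvalues j) (fun j => ∑ i ∈ S, C j i)
      hcS0 hcS1
    simp only [neg_mul] at h
    rw [← Finset.sum_neg_distrib]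
    exact h

lemma diag_eq_eigen {d : ℕ} (A : Matrix (Fin d) (Fin d) ℂ) (hA : A.IsHermitian) (j : Fin d) :
    (((hA.eigenvectorUnitary : Matrix (Fin d) (Fin d) ℂ))ᴴ * A *
      (hA.eigenvectorUnitary : Matrix (Fin d) (Fin d) ℂ)) j j = (hA.eigenvalues j : ℂ) := by
  have h := hA.conjStarAlgAut_star_eigenvectorUnitary
  rw [Unitary.conjStarAlgAut_star_apply, Matrix.star_eq_conjTranspose] at h
  rw [h, Matrix.diagonal_apply_eq]
  rfl

lemma sum_abs_eig_neg_le {d : ℕ} (A B : Matrix (Fin d) (Fin d) ℂ)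
    (hA : A.IsHermitian) (hB : B.IsHermitian) (hBA : B = -A) :
    ∑ i, |hB.eigenvalues i| ≤ ∑ i, |hA.eigenvalues i| := by
  classical
  set VB : Matrix (Fin d) (Fin d) ℂ := (hB.eigenvectorUnitary : Matrix (Fin d) (Fin d) ℂ)
    with hVBdef
  have hVB : VB ∈ Matrix.unitaryGroup (Fin d) ℂ := (hB.eigenvectorUnitary).2
  have hBdiag : ∀ j, ((VBᴴ * B * VB) j j).re = hB.eigenvalues j := fun j => by
    rw [diag_eq_eigen B hB j, Complex.ofReal_re]
  have hABdiag : ∀ j, ((VBᴴ * A * VB) j j).re = - hB.eigenvalues j := by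
    intro j
    have h1 : VBᴴ * A * VB = - (VBᴴ * B * VB) := by
      rw [hBA]
      simp [Matrix.mul_neg, Matrix.neg_mul]
    rw [h1, Matrix.neg_apply, Complex.neg_re, hBdiag j]
  have habs : ∀ j, |hB.eigenvalues j| = max (hB.eigenvalues j) 0 + max (- hB.eigenvalues j) 0 :=
    fun j => abs_decomp _
  have hP : ∑ j, max (hB.eigenvalues j) 0 ≤ ∑ j, max (- hA.eigenvalues j) 0 := by
    rw [sum_max_filter]
    set S := Finset.univ.filter (fun j => 0 < hB.eigenvalues j)
    have h1 : ∑ j ∈ S, hB.eigenvalues j = - ∑ j ∈ S, ((VBᴴ * A * VB) j j).re := by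
      rw [← Finset.sum_neg_distrib]
      exact Finset.sum_congr rfl fun j _ => by rw [hABdiag j]; ring
    rw [h1]
    exact (diag_sum_bounds A hA VB hVB S).2
  have hN : ∑ j, max (- hB.eigenvalues j) 0 ≤ ∑ j, max (hA.eigenvalues j) 0 := by
    rw [sum_max_filter]
    set S := Finset.univ.filter (fun j => 0 < - hB.eigenvalues j)
    have h1 : ∑ j ∈ S, (- hB.eigenvalues j) = ∑ j ∈ S, ((VBᴴ * A * VB) j j).re :=
      Finset.sum_congr rfl fun j _ => (hABdiag j).symm
    rw [h1]
    exact (diag_sum_bounds A hA VB hVB S).1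
  calc ∑ i, |hB.eigenvalues i|
      = ∑ j, max (hB.eigenvalues j) 0 + ∑ j, max (- hB.eigenvalues j) 0 := by
        rw [← Finset.sum_add_distrib]
        exact Finset.sum_congr rfl fun j _ => habs j
  _ ≤ ∑ j, max (- hA.eigenvalues j) 0 + ∑ j, max (hA.eigenvalues j) 0 := add_le_add hP hN
  _ = ∑ i, |hA.eigenvalues i| := by
        rw [← Finset.sum_add_distrib]
        refine Finset.sum_congr rfl fun j _ => ?_
        rw [abs_decomp (hA.eigenvalues j)]
        ring



lemma osm {d : ℕ} (hd : 2 ≤ d) {t : ℝ} (ht : 0 ≤ t) {f : ℝ → ℝ}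
    (hf_conv : ConvexOn ℝ (Set.Icc 0 t) f)
    (ρ σ : Matrix (Fin d) (Fin d) ℂ)
    (hρ : ρ.PosSemidef) (hσ : σ.PosSemidef)
    (hρtr : ρ.trace = (t : ℂ)) (hσtr : σ.trace = (t : ℂ))
    (ε : ℝ)
    (hε : ε = (1/2) * ∑ i, |(hρ.isHermitian.sub hσ.isHermitian).eigenvalues i|) :
    ∑ i, f (hρ.isHermitian.eigenvalues i) - ∑ i, f (hσ.isHermitian.eigenvalues i) ≤
      f t - f (t - ε) - ((d : ℝ) - 1) * (f (ε / ((d : ℝ) - 1)) - f 0) := by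
  classical
  set r : Fin d → ℝ := hρ.isHermitian.eigenvalues with hrdef
  set s : Fin d → ℝ := hσ.isHermitian.eigenvalues with hsdef
  set a : Fin d → ℝ := (hρ.isHermitian.sub hσ.isHermitian).eigenvalues with hadef
  have hr0 : ∀ i, 0 ≤ r i := fun i => hρ.eigenvalues_nonneg i
  have hs0 : ∀ i, 0 ≤ s i := fun i => hσ.eigenvalues_nonneg i
  have hrt : ∑ i, r i = t := by
    have h := trace_eq_sum_eigen ρ hρ.isHermitian
    rw [hρtr] at h
    exact_mod_cast h.symm
  have hst : ∑ i, s i = t := by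
    have h := trace_eq_sum_eigen σ hσ.isHermitian
    rw [hσtr] at h
    exact_mod_cast h.symm
  have hat0 : ∑ i, a i = 0 := by
    have h := trace_eq_sum_eigen (ρ - σ) (hρ.isHermitian.sub hσ.isHermitian)
    rw [Matrix.trace_sub, hρtr, hσtr, sub_self] at h
    exact_mod_cast h.symm
  have habs : ∑ j, |a j| = ∑ j, max (a j) 0 + ∑ j, max (- a j) 0 := by
    rw [← Finset.sum_add_distrib]
    exact Finset.sum_congr rfl fun j _ => abs_decomp (a j)
  have hself : ∑ j, a j = ∑ j, max (a j) 0 - ∑ j, max (- a j) 0 := by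
    rw [← Finset.sum_sub_distrib]
    exact Finset.sum_congr rfl fun j _ => self_decomp (a j)
  have hε' : ∑ j, max (a j) 0 = ε := by
    rw [hε]; linarith
  have hε0 : 0 ≤ ε := by
    rw [← hε']
    exact Finset.sum_nonneg fun j _ => le_max_right _ _
  have hst' : ∀ j, s j ≤ t := fun j => by
    calc s j ≤ ∑ i, s i := Finset.single_le_sum (fun i _ => hs0 i) (Finset.mem_univ j)
    _ = t := hst
  -- vector q : diagonal of σ in the eigenbasis of ρ
  obtain ⟨Cσ, hCσ0, hCσrow, hCσcol, hCσdiag⟩ := diag_conj_repr σ hσ.isHermitian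
    (hρ.isHermitian.eigenvectorUnitary : Matrix (Fin d) (Fin d) ℂ)
    (hρ.isHermitian.eigenvectorUnitary).2
  set q : Fin d → ℝ := fun i => ∑ j, Cσ j i * s j with hqdef
  have hq0 : ∀ i, 0 ≤ q i := fun i =>
    Finset.sum_nonneg fun j _ => mul_nonneg (hCσ0 j i) (hs0 j)
  have hqs : ∑ i, q i = t := by
    rw [hqdef]
    rw [Finset.sum_comm]
    calc ∑ j, ∑ i, Cσ j i * s j = ∑ j, (∑ i, Cσ j i) * s j := by
          refine Finset.sum_congr rfl fun j _ => ?_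
          rw [Finset.sum_mul]
    _ = ∑ j, s j := by
          refine Finset.sum_congr rfl fun j _ => ?_
          rw [hCσrow j, one_mul]
    _ = t := hst
  have hqf : ∑ i, f (q i) ≤ ∑ i, f (s i) := by
    have hper : ∀ i, f (q i) ≤ ∑ j, Cσ j i * f (s j) := by
      intro i
      have h := hf_conv.map_sum_le (t := Finset.univ) (w := fun j => Cσ j i) (p := s)
        (fun j _ => hCσ0 j i) (hCσcol i) (fun j _ => ⟨hs0 j, hst' j⟩)
      simpa [smul_eq_mul] using h
    calc ∑ i, f (q i) ≤ ∑ i, ∑ j, Cσ j i * f (s j) := Finset.sum_le_sum fun i _ => hper i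
    _ = ∑ j, (∑ i, Cσ j i) * f (s j) := by
        rw [Finset.sum_comm]
        exact Finset.sum_congr rfl fun j _ => (Finset.sum_mul _ _ _).symm
    _ = ∑ i, f (s i) := by
        refine Finset.sum_congr rfl fun j _ => ?_
        rw [hCσrow j, one_mul]
  have hAdiagsub : ∀ i,
      (((hρ.isHermitian.eigenvectorUnitary : Matrix (Fin d) (Fin d) ℂ))ᴴ * (ρ - σ) *
        (hρ.isHermitian.eigenvectorUnitary : Matrix (Fin d) (Fin d) ℂ)) i i
        = ((r i - q i : ℝ) : ℂ) := by
    intro i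
    rw [Matrix.mul_sub, Matrix.sub_mul, Matrix.sub_apply, diag_eq_eigen ρ hρ.isHermitian i,
      hCσdiag i]
    simp only [hqdef, hsdef, hrdef]
    push_cast
    ring
  have hqδ : ∑ i, max (r i - q i) 0 ≤ ε := by
    rw [sum_max_filter]
    have h1 : ∑ i ∈ Finset.univ.filter (fun i => 0 < r i - q i), (r i - q i)
        = ∑ i ∈ Finset.univ.filter (fun i => 0 < r i - q i),
          ((((hρ.isHermitian.eigenvectorUnitary : Matrix (Fin d) (Fin d) ℂ))ᴴ * (ρ - σ) *
            (hρ.isHermitian.eigenvectorUnitary : Matrix (Fin d) (Fin d) ℂ)) i i).re := by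
      refine Finset.sum_congr rfl fun i _ => ?_
      rw [hAdiagsub i, Complex.ofReal_re]
    rw [h1, ← hε']
    exact (diag_sum_bounds (ρ - σ) (hρ.isHermitian.sub hσ.isHermitian)
      (hρ.isHermitian.eigenvectorUnitary : Matrix (Fin d) (Fin d) ℂ)
      (hρ.isHermitian.eigenvectorUnitary).2 _).1
  -- vector q' : permuted spectrum of σ
  obtain ⟨Cρ', hCρ'0, hCρ'row, hCρ'col, hCρ'diag⟩ := diag_conj_repr ρ hρ.isHermitian
    ((hρ.isHermitian.sub hσ.isHermitian).eigenvectorUnitary : Matrix (Fin d) (Fin d) ℂ)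
    ((hρ.isHermitian.sub hσ.isHermitian).eigenvectorUnitary).2
  obtain ⟨Cσ', hCσ'0, hCσ'row, hCσ'col, hCσ'diag⟩ := diag_conj_repr σ hσ.isHermitian
    ((hρ.isHermitian.sub hσ.isHermitian).eigenvectorUnitary : Matrix (Fin d) (Fin d) ℂ)
    ((hρ.isHermitian.sub hσ.isHermitian).eigenvectorUnitary).2
  have hadiag : ∀ i, a i = (∑ j, Cρ' j i * r j) - (∑ j, Cσ' j i * s j) := by
    intro i
    have h1 := diag_eq_eigen (ρ - σ) (hρ.isHermitian.sub hσ.isHermitian) i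
    rw [Matrix.mul_sub, Matrix.sub_mul, Matrix.sub_apply, hCρ'diag i, hCσ'diag i] at h1
    exact_mod_cast h1.symm
  set Sp : Finset (Fin d) := Finset.univ.filter (fun i => 0 < a i) with hSpdef
  set k : ℕ := Sp.card with hkdef
  have hkd : k ≤ d := by
    calc k ≤ (Finset.univ : Finset (Fin d)).card := Finset.card_filter_le _ _
    _ = d := by rw [Finset.card_univ, Fintype.card_fin]
  have hεsum : ε = ∑ i ∈ Sp, a i := by rw [← hε', sum_max_filter]
  set cr : Fin d → ℝ := fun j => ∑ i ∈ Sp, Cρ' j i with hcrdef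
  set cs : Fin d → ℝ := fun j => ∑ i ∈ Sp, Cσ' j i with hcsdef
  have hcr0 : ∀ j, 0 ≤ cr j := fun j => Finset.sum_nonneg fun i _ => hCρ'0 j i
  have hcs0 : ∀ j, 0 ≤ cs j := fun j => Finset.sum_nonneg fun i _ => hCσ'0 j i
  have hcr1 : ∀ j, cr j ≤ 1 := fun j => by
    calc cr j ≤ ∑ i, Cρ' j i :=
          Finset.sum_le_sum_of_subset_of_nonneg (Finset.subset_univ _) fun i _ _ => hCρ'0 j i
    _ = 1 := hCρ'row j
  have hcs1 : ∀ j, cs j ≤ 1 := fun j => by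
    calc cs j ≤ ∑ i, Cσ' j i :=
          Finset.sum_le_sum_of_subset_of_nonneg (Finset.subset_univ _) fun i _ _ => hCσ'0 j i
    _ = 1 := hCσ'row j
  have hcrk : ∑ j, cr j = (k : ℝ) := by
    rw [hcrdef]
    rw [Finset.sum_comm]
    calc ∑ i ∈ Sp, ∑ j, Cρ' j i = ∑ i ∈ Sp, (1:ℝ) :=
          Finset.sum_congr rfl fun i _ => hCρ'col i
    _ = (k : ℝ) := by rw [Finset.sum_const, nsmul_eq_mul, mul_one, hkdef]
  have hcsk : ∑ j, cs j = (k : ℝ) := by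
    rw [hcsdef]
    rw [Finset.sum_comm]
    calc ∑ i ∈ Sp, ∑ j, Cσ' j i = ∑ i ∈ Sp, (1:ℝ) :=
          Finset.sum_congr rfl fun i _ => hCσ'col i
    _ = (k : ℝ) := by rw [Finset.sum_const, nsmul_eq_mul, mul_one, hkdef]
  have hsum1 : ∑ i ∈ Sp, a i = ∑ j, r j * cr j - ∑ j, s j * cs j := by
    calc ∑ i ∈ Sp, a i
        = ∑ i ∈ Sp, ((∑ j, Cρ' j i * r j) - (∑ j, Cσ' j i * s j)) :=
          Finset.sum_congr rfl fun i _ => hadiag i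
    _ = ∑ i ∈ Sp, (∑ j, Cρ' j i * r j) - ∑ i ∈ Sp, (∑ j, Cσ' j i * s j) :=
          Finset.sum_sub_distrib _ _
    _ = ∑ j, r j * cr j - ∑ j, s j * cs j := by
        rw [Finset.sum_comm, Finset.sum_comm (s := Sp)]
        congr 1
        · exact Finset.sum_congr rfl fun j _ => by
            rw [hcrdef, Finset.mul_sum]
            exact Finset.sum_congr rfl fun i _ => mul_comm _ _
        · exact Finset.sum_congr rfl fun j _ => by
            rw [hcsdef, Finset.mul_sum]
            exact Finset.sum_congr rfl fun i _ => mul_comm _ _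
  obtain ⟨T, hTcard, hTtop⟩ := exists_topk r k hkd
  obtain ⟨Bo, hBocard, hBobot'⟩ := exists_topk (fun i => - s i) k hkd
  have hBobot : ∀ i ∈ Bo, ∀ j, j ∉ Bo → s i ≤ s j := fun i hi j hj => by
    have := hBobot' i hi j hj
    simpa using this
  have hup := lp_upper r cr hcr0 hcr1 k hcrk T hTcard hTtop
  have hdown := lp_lower' s cs hcs0 hcs1 k hcsk Bo hBocard hBobot
  have hTB : ε ≤ ∑ i ∈ T, r i - ∑ i ∈ Bo, s i := by
    rw [hεsum, hsum1]
    linarith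
  obtain ⟨π, hπ⟩ := exists_perm_finsets T Bo (by rw [hTcard, hBocard])
  set q' : Fin d → ℝ := fun i => s (π i) with hq'def
  have hq'0 : ∀ i, 0 ≤ q' i := fun i => hs0 _
  have hq's : ∑ i, q' i = t := by
    rw [hq'def]
    rw [Equiv.sum_comp π s]
    exact hst
  have hq'f : ∑ i, f (q' i) ≤ ∑ i, f (s i) :=
    le_of_eq (Equiv.sum_comp π (fun j => f (s j)))
  have himg : T.image π = Bo := by
    ext j
    simp only [Finset.mem_image]
    constructor
    · rintro ⟨i, hiT, rfl⟩
      exact (hπ i).mp hiT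
    · intro hj
      exact ⟨π.symm j, (hπ _).mpr (by rwa [Equiv.apply_symm_apply]),
        Equiv.apply_symm_apply π j⟩
  have hsumTBo : ∑ i ∈ T, s (π i) = ∑ j ∈ Bo, s j := by
    rw [← himg]
    exact (Finset.sum_image fun x _ y _ h => π.injective h).symm
  have hq'δ : ε ≤ ∑ i, max (r i - q' i) 0 := by
    calc ε ≤ ∑ i ∈ T, r i - ∑ i ∈ Bo, s i := hTB
    _ = ∑ i ∈ T, (r i - s (π i)) := by rw [Finset.sum_sub_distrib, hsumTBo]
    _ ≤ ∑ i ∈ T, max (r i - q' i) 0 := Finset.sum_le_sum fun i _ => le_max_left _ _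
    _ ≤ ∑ i, max (r i - q' i) 0 :=
        Finset.sum_le_sum_of_subset_of_nonneg (Finset.subset_univ _)
          fun i _ _ => le_max_right _ _
  exact one_sided hd ht hf_conv r s q q' ε hε0 hr0 hrt hq0 hqs hqf hqδ hq'0 hq's hq'f hq'δ

end FEB

theorem fEntropy_continuity_bound_trace_t (d : ℕ) (hd : 2 ≤ d) (t : ℝ) (ht : 0 ≤ t)
    (f : ℝ → ℝ)
    (hf_cont : ContinuousOn f (Set.Icc 0 t))
    (hf_conv : ConvexOn ℝ (Set.Icc 0 t) f)
    (ρ σ : Matrix (Fin d) (Fin d) ℂ)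
    (hρ : ρ.PosSemidef) (hσ : σ.PosSemidef)
    (hρtr : ρ.trace = (t : ℂ)) (hσtr : σ.trace = (t : ℂ))
    (ε : ℝ)
    (hε : ε = (1/2) * ∑ i, |(hρ.isHermitian.sub hσ.isHermitian).eigenvalues i|) :
    |(-∑ i, f (hρ.isHermitian.eigenvalues i)) - (-∑ i, f (hσ.isHermitian.eigenvalues i))| ≤
      f t - f (t - ε) - ((d : ℝ) - 1) * (f (ε / ((d : ℝ) - 1)) - f 0) := by
  have h1 := FEB.osm hd ht hf_conv ρ σ hρ hσ hρtr hσtr ε hε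
  have hε2 : ε = (1/2) * ∑ i, |(hσ.isHermitian.sub hρ.isHermitian).eigenvalues i| := by
    rw [hε]
    have e1 : ρ - σ = -(σ - ρ) := (neg_sub σ ρ).symm
    have e2 : σ - ρ = -(ρ - σ) := (neg_sub ρ σ).symm
    have hle1 := FEB.sum_abs_eig_neg_le (σ - ρ) (ρ - σ) (hσ.isHermitian.sub hρ.isHermitian)
      (hρ.isHermitian.sub hσ.isHermitian) e1
    have hle2 := FEB.sum_abs_eig_neg_le (ρ - σ) (σ - ρ) (hρ.isHermitian.sub hσ.isHermitian)
      (hσ.isHermitian.sub hρ.isHermitian) e2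
    have : ∑ i, |(hρ.isHermitian.sub hσ.isHermitian).eigenvalues i|
        = ∑ i, |(hσ.isHermitian.sub hρ.isHermitian).eigenvalues i| :=
      le_antisymm hle1 hle2
    rw [this]
  have h2 := FEB.osm hd ht hf_conv σ ρ hσ hρ hσtr hρtr ε hε2
  rw [neg_sub_neg, abs_sub_le_iff]
  exact ⟨h2, h1⟩
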